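/- Let Z = (∑ Y)_p for 1 ≤ p < ∞, with shifts L, R and P₀ the projection onto the zeroth coordinate. For any T ∈ L(Z), the operator T P₀ is a commutator: explicitly, with S_A = ∑_{n=0}^∞ Rⁿ (P₀TP₀) Lⁿ (strongly convergent), T P₀ = R·(L T P₀ − S_A L) − (L T P₀ − S_A L)·R. -/
import Mathlib


open ENNReal Filter Topology

/-- For `Z = (∑ Y)_p`, `1 ≤ p < ∞`, and `T ∈ L(Z)`: with `S_A = ∑ₙ Rⁿ (P₀ T P₀) Lⁿ`
(strongly convergent), `T P₀ = R (L T P₀ − S_A L) − (L T P₀ − S_A L) R`,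
so `T P₀` is a commutator. -/
theorem TP0_commutator {Y : Type*} [NormedAddCommGroup Y] [NormedSpace ℂ Y]
    [CompleteSpace Y] (p : ℝ≥0∞) [Fact (1 ≤ p)] (hp : p ≠ ∞)
    (L R P0 : lp (fun _ : ℕ => Y) p →L[ℂ] lp (fun _ : ℕ => Y) p)
    (hL : ∀ (f : lp (fun _ : ℕ => Y) p) (n : ℕ), L f n = f (n + 1))
    (hR0 : ∀ f : lp (fun _ : ℕ => Y) p, R f 0 = 0)
    (hR : ∀ (f : lp (fun _ : ℕ => Y) p) (n : ℕ), R f (n + 1) = f n)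
    (hP0 : ∀ f : lp (fun _ : ℕ => Y) p, P0 f 0 = f 0)
    (hP : ∀ (f : lp (fun _ : ℕ => Y) p) (n : ℕ), P0 f (n + 1) = 0)
    (T SA : lp (fun _ : ℕ => Y) p →L[ℂ] lp (fun _ : ℕ => Y) p)
    (hSA : ∀ x : lp (fun _ : ℕ => Y) p,
      Tendsto (fun N => ∑ n ∈ Finset.range N, (R ^ n * (P0 * T * P0) * L ^ n) x)
        atTop (𝓝 (SA x))) :
    T * P0 = R * (L * T * P0 - SA * L) - (L * T * P0 - SA * L) * R := by
  have hLR : L * R = 1 := by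
    refine ContinuousLinearMap.ext fun x => lp.ext (funext fun n => ?_)
    simp [ContinuousLinearMap.mul_apply, hL, hR]
  have hRL : R * L = 1 - P0 := by
    refine ContinuousLinearMap.ext fun x => lp.ext (funext fun n => ?_)
    cases n with
    | zero =>
      simp [ContinuousLinearMap.mul_apply, hR0, ContinuousLinearMap.sub_apply,
        lp.coeFn_sub, Pi.sub_apply, hP0]
    | succ n =>
      simp [ContinuousLinearMap.mul_apply, hR, hL, ContinuousLinearMap.sub_apply,
        lp.coeFn_sub, Pi.sub_apply, hP]
  have hP0R : P0 * R = 0 := by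
    refine ContinuousLinearMap.ext fun x => lp.ext (funext fun n => ?_)
    cases n with
    | zero =>
      simp [ContinuousLinearMap.mul_apply, hP0, hR0, lp.coeFn_zero]
    | succ n =>
      simp [ContinuousLinearMap.mul_apply, hP, lp.coeFn_zero]
  have hRSAL : R * (SA * L) = SA - P0 * T * P0 := by
    refine ContinuousLinearMap.ext fun x => ?_
    have h1 : Tendsto (fun N => R ((fun N => ∑ n ∈ Finset.range N,
        (R ^ n * (P0 * T * P0) * L ^ n) (L x)) N)) atTop (𝓝 (R (SA (L x)))) :=
      (R.continuous.tendsto _).comp (hSA (L x))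
    have heq : ∀ N, R (∑ n ∈ Finset.range N, (R ^ n * (P0 * T * P0) * L ^ n) (L x))
        = (∑ n ∈ Finset.range (N + 1), (R ^ n * (P0 * T * P0) * L ^ n) x)
          - (P0 * T * P0) x := by
      intro N
      rw [map_sum, Finset.sum_range_succ' (fun n => (R ^ n * (P0 * T * P0) * L ^ n) x)]
      simp only [pow_zero, one_mul, mul_one, add_sub_cancel_right]
      refine Finset.sum_congr rfl fun n _ => ?_
      rw [pow_succ' R, pow_succ L]
      simp [ContinuousLinearMap.mul_apply]
    have h2 : Tendsto (fun N => (∑ n ∈ Finset.range (N + 1),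
        (R ^ n * (P0 * T * P0) * L ^ n) x) - (P0 * T * P0) x) atTop
        (𝓝 (SA x - (P0 * T * P0) x)) :=
      Tendsto.sub_const ((hSA x).comp (tendsto_add_atTop_nat 1)) _
    have h1' : Tendsto (fun N => (∑ n ∈ Finset.range (N + 1),
        (R ^ n * (P0 * T * P0) * L ^ n) x) - (P0 * T * P0) x) atTop
        (𝓝 (R (SA (L x)))) := by
      simp only [heq] at h1
      exact h1
    have := tendsto_nhds_unique h1' h2
    simpa [ContinuousLinearMap.mul_apply, ContinuousLinearMap.sub_apply] using this
  calc T * P0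
      = (1 - P0) * T * P0 - (SA - P0 * T * P0) - (L * T * 0 - SA * 1) := by noncomm_ring
    _ = (R * L) * T * P0 - R * (SA * L) - (L * T * (P0 * R) - SA * (L * R)) := by
        rw [hRL, hRSAL, hP0R, hLR]
    _ = R * (L * T * P0 - SA * L) - (L * T * P0 - SA * L) * R := by noncomm_ring
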